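/- Let P be a finite patchwork on a set Ω, let A ∈ P be nonempty, not autonomous, and with A ≠ Ω, and let B be the least autonomous member of P properly containing A. Then A can be written as the disjoint union of two nonempty members A₁, A₂ of P, each of which is a union of members of the cohort under B. -/

import Mathlib

/-- A subset `A` is convex with respect to an order relation `le` if whenever
`p ≤ q ≤ r` with `p ∈ A` and `r ∈ A`, also `q ∈ A`. -/
def IsConvex {Ω : Type*} (le : Ω → Ω → Prop) (A : Set Ω) : Prop :=
  ∀ p q r : Ω, le p q → le q r → p ∈ A → r ∈ A → q ∈ A

/-- Two subsets overlap if they have nonempty intersection and neither contains the other. -/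
def Overlap {Ω : Type*} (A B : Set Ω) : Prop :=
  (A ∩ B).Nonempty ∧ ¬ A ⊆ B ∧ ¬ B ⊆ A

/-- A patchwork on `Ω` is a set of subsets of `Ω` containing `∅` and `Ω` and closed under
intersection, union and difference of overlapping pairs. -/
def IsPatchwork {Ω : Type*} (P : Set (Set Ω)) : Prop :=
  ∅ ∈ P ∧ Set.univ ∈ P ∧
    ∀ A ∈ P, ∀ B ∈ P, Overlap A B → A ∩ B ∈ P ∧ A ∪ B ∈ P ∧ A \ B ∈ P

/-- A member of a patchwork is autonomous if it is nonempty and overlaps no member. -/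
def Autonomous {Ω : Type*} (P : Set (Set Ω)) (A : Set Ω) : Prop :=
  A ∈ P ∧ A.Nonempty ∧ ∀ B ∈ P, ¬ Overlap A B

/-- The cohort under `B`: the maximal autonomous proper subsets of `B`. -/
def Cohort {Ω : Type*} (P : Set (Set Ω)) (B : Set Ω) : Set (Set Ω) :=
  {A | Autonomous P A ∧ A ⊂ B ∧ ∀ C, Autonomous P C → C ⊂ B → A ⊆ C → A = C}

/-- Two members of a patchwork are adjacent if they are disjoint and their union is a member. -/
def Adjacent {Ω : Type*} (P : Set (Set Ω)) (A B : Set Ω) : Prop :=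
  Disjoint A B ∧ A ∪ B ∈ P

/-- The smallest patchwork on `Ω` containing `C`. -/
def patchworkClosure {Ω : Type*} (C : Set (Set Ω)) : Set (Set Ω) :=
  ⋂₀ {P | IsPatchwork P ∧ C ⊆ P}

theorem statement8 {Ω : Type*} (P : Set (Set Ω)) (hP : IsPatchwork P) (hfin : P.Finite)
    (A : Set Ω) (hA : A ∈ P) (hne : A.Nonempty) (hnaut : ¬ Autonomous P A)
    (hAne : A ≠ Set.univ)
    (B : Set Ω) (hB : Autonomous P B) (hAB : A ⊂ B)
    (hleast : ∀ C : Set Ω, Autonomous P C → A ⊂ C → B ⊆ C) :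
    ∃ A₁ A₂ : Set Ω, A₁ ∈ P ∧ A₂ ∈ P ∧ A₁.Nonempty ∧ A₂.Nonempty ∧
      Disjoint A₁ A₂ ∧ A = A₁ ∪ A₂ ∧
      (∃ F ⊆ Cohort P B, A₁ = ⋃₀ F) ∧ (∃ F ⊆ Cohort P B, A₂ = ⋃₀ F) := by
  obtain ⟨hemp, huniv, hclose⟩ := hP
  -- A overlaps some D ∈ P
  have hov : ∃ D ∈ P, Overlap A D := by
    by_contra h
    push_neg at h
    exact hnaut ⟨hA, hne, h⟩
  obtain ⟨D, hDP, hADne, hnAD, hnDA⟩ := hov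
  obtain ⟨hIP, hUP, hDiffP⟩ := hclose A hA D hDP ⟨hADne, hnAD, hnDA⟩
  -- key: every point of A lies in a cohort member contained in A
  have key : ∀ x ∈ A, ∃ M, M ∈ Cohort P B ∧ x ∈ M ∧ M ⊆ A := by
    intro x hx
    -- step 1: a minimal member of P containing x within A is autonomous
    have h1 : ∃ S, Autonomous P S ∧ x ∈ S ∧ S ⊆ A := by
      obtain ⟨C, hC, hCmin'⟩ := Set.Finite.exists_minimal
        (s := {C | C ∈ P ∧ x ∈ C ∧ C ⊆ A}) (hfin.subset fun C hC => hC.1)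
        ⟨A, hA, hx, subset_rfl⟩
      have hCmin : ∀ C' ∈ {C | C ∈ P ∧ x ∈ C ∧ C ⊆ A}, C' ≤ C → C = C' :=
        fun C' h1 h2 => le_antisymm (hCmin' h1 h2) h2
      refine ⟨C, ⟨hC.1, ⟨x, hC.2.1⟩, ?_⟩, hC.2.1, hC.2.2⟩
      rintro E hE ⟨hne', hCE, hEC⟩
      obtain ⟨hI, hU, hDf⟩ := hclose C hC.1 E hE ⟨hne', hCE, hEC⟩
      by_cases hxE : x ∈ E
      · have heq : C = C ∩ E :=
          hCmin (C ∩ E) ⟨hI, ⟨hC.2.1, hxE⟩, Set.inter_subset_left.trans hC.2.2⟩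
            Set.inter_subset_left
        exact hCE (fun y hy => (heq ▸ hy : y ∈ C ∩ E).2)
      · have heq : C = C \ E :=
          hCmin (C \ E) ⟨hDf, ⟨hC.2.1, hxE⟩, Set.diff_subset.trans hC.2.2⟩
            Set.diff_subset
        obtain ⟨y, hyC, hyE⟩ := hne'
        exact (heq ▸ hyC : y ∈ C \ E).2 hyE
    obtain ⟨S, hSaut, hxS, hSA⟩ := h1
    have hSB : S ⊂ B := lt_of_le_of_lt hSA hAB
    -- step 2: take a maximal autonomous proper subset of B containing x
    obtain ⟨M, hM, hMmax'⟩ := Set.Finite.exists_maximal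
      (s := {S | Autonomous P S ∧ x ∈ S ∧ S ⊂ B}) (hfin.subset fun S hS => hS.1.1)
      ⟨S, hSaut, hxS, hSB⟩
    have hMmax : ∀ C ∈ {S | Autonomous P S ∧ x ∈ S ∧ S ⊂ B}, M ≤ C → M = C :=
      fun C h1 h2 => le_antisymm h2 (hMmax' h1 h2)
    have hMc : M ∈ Cohort P B := by
      refine ⟨hM.1, hM.2.2, fun C hC hCB hMC => ?_⟩
      exact hMmax C ⟨hC, hMC hM.2.1, hCB⟩ hMC
    -- M ⊆ A
    have hMA : M ⊆ A := by
      by_contra hMA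
      have hAM : A ⊆ M := by
        by_contra hAM
        exact hM.1.2.2 A hA ⟨⟨x, hM.2.1, hx⟩, hMA, hAM⟩
      have hAneM : A ≠ M := fun h => hnaut (h ▸ hM.1)
      exact hM.2.2.not_subset (hleast M hM.1 (hAM.ssubset_of_ne hAneM))
    exact ⟨M, hMc, hM.2.1, hMA⟩
  -- any cohort member inside A is inside A ∩ D or inside A \ D
  have split : ∀ M, M ∈ Cohort P B → M ⊆ A → M ⊆ A ∩ D ∨ M ⊆ A \ D := by
    intro M hMc hMA
    have hnDM : ¬ D ⊆ M := fun h => hnDA (h.trans hMA)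
    by_cases hMD : M ⊆ D
    · exact Or.inl (Set.subset_inter hMA hMD)
    · have hdisj : M ∩ D = ∅ := by
        by_contra h
        exact hMc.1.2.2 D hDP ⟨Set.nonempty_iff_ne_empty.mpr h, hMD, hnDM⟩
      exact Or.inr fun y hy => ⟨hMA hy, fun hyD =>
        (Set.eq_empty_iff_forall_notMem.mp hdisj y) ⟨hy, hyD⟩⟩
  refine ⟨A ∩ D, A \ D, hIP, hDiffP, hADne, Set.diff_nonempty.mpr hnAD,
    Set.disjoint_left.mpr (fun y hy hy2 => hy2.2 hy.2),
    (Set.inter_union_diff A D).symm, ?_, ?_⟩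
  · refine ⟨{M | M ∈ Cohort P B ∧ M ⊆ A ∩ D}, fun M hM => hM.1, ?_⟩
    apply Set.Subset.antisymm
    · intro x hx
      obtain ⟨M, hMc, hxM, hMA⟩ := key x hx.1
      rcases split M hMc hMA with h | h
      · exact ⟨M, ⟨hMc, h⟩, hxM⟩
      · exact absurd hx.2 (h hxM).2
    · exact Set.sUnion_subset fun M hM => hM.2
  · refine ⟨{M | M ∈ Cohort P B ∧ M ⊆ A \ D}, fun M hM => hM.1, ?_⟩
    apply Set.Subset.antisymm
    · intro x hx
      obtain ⟨M, hMc, hxM, hMA⟩ := key x hx.1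
      rcases split M hMc hMA with h | h
      · exact absurd (h hxM).2 hx.2
      · exact ⟨M, ⟨hMc, h⟩, hxM⟩
    · exact Set.sUnion_subset fun M hM => hM.2
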